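/- Let M be a distance-edge-monitoring set of a connected graph G. Then for any two distinct edges e and e' of G, the sets P(M,e) and P(M,e') are distinct. -/

import Mathlib

open SimpleGraph

/-- `e` is monitored by vertex `x` in `G`: some vertex `y` has its distance to `x`
changed when `e` is deleted (distances in `ℕ∞`, `⊤` if disconnected). -/
def monitors {V : Type*} (G : SimpleGraph V) (x : V) (e : Sym2 V) : Prop :=
  ∃ y : V, G.edist x y ≠ (G.deleteEdges {e}).edist x y

/-- `M` is a distance-edge-monitoring set of `G`. -/
def IsDEMSet {V : Type*} (G : SimpleGraph V) (M : Set V) : Prop :=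
  ∀ e ∈ G.edgeSet, ∃ x ∈ M, monitors G x e

/-- The smallest size of a distance-edge-monitoring set of `G`. -/
noncomputable def dem (V : Type*) [Fintype V] (G : SimpleGraph V) : ℕ :=
  sInf {k | ∃ M : Finset V, M.card = k ∧ IsDEMSet G ↑M}

/-- The set `P(M, e)` of pairs `(x, y)`, `x ∈ M`, whose distance changes when `e` is deleted. -/
def pairs {V : Type*} (G : SimpleGraph V) (M : Set V) (e : Sym2 V) : Set (V × V) :=
  {p | p.1 ∈ M ∧ G.edist p.1 p.2 ≠ (G.deleteEdges {e}).edist p.1 p.2}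

/-- `C` is a vertex cover of `G`. -/
def IsVC {V : Type*} (G : SimpleGraph V) (C : Set V) : Prop :=
  ∀ e ∈ G.edgeSet, ∃ v ∈ C, v ∈ e

/-- The vertex cover number of `G`. -/
noncomputable def vcNum (V : Type*) [Fintype V] (G : SimpleGraph V) : ℕ :=
  sInf {k | ∃ C : Finset V, C.card = k ∧ IsVC G ↑C}

/-- The feedback edge set number: minimum number of edges whose deletion leaves a forest. -/
noncomputable def fes (V : Type*) [Fintype V] (G : SimpleGraph V) : ℕ :=
  sInf {k | ∃ F : Finset (Sym2 V), F.card = k ∧ (G.deleteEdges ↑F).IsAcyclic}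

namespace DEMAux

variable {V : Type*} {G : SimpleGraph V}

lemma edist_eq_coe_dist {u v : V} (h : G.Reachable u v) :
    G.edist u v = (G.dist u v : ℕ∞) := by
  rw [SimpleGraph.dist, ENat.coe_toNat (edist_ne_top_iff_reachable.mpr h)]

/-- decompose a walk at an occurrence of an edge -/
lemma exists_decomp {x y : V} (p : G.Walk x y) (e : Sym2 V) (he : e ∈ p.edges) :
    ∃ (u v : V) (h : G.Adj u v) (q : G.Walk x u) (r : G.Walk v y),
      e = s(u, v) ∧ p = q.append (SimpleGraph.Walk.cons h r) := by
  induction p with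
  | nil => simp at he
  | @cons a b c h p ih =>
    rw [SimpleGraph.Walk.edges_cons, List.mem_cons] at he
    rcases he with he | he
    · exact ⟨a, b, h, SimpleGraph.Walk.nil, p, he, rfl⟩
    · obtain ⟨u, v, hadj, q, r, heq, hp⟩ := ih he
      exact ⟨u, v, hadj, SimpleGraph.Walk.cons h q, r, heq, by
        rw [SimpleGraph.Walk.cons_append, hp]⟩

/-- if a walk in `G` avoids `e`, the deleted-graph edist is at most its length -/
lemma edist_delete_le {x y : V} (e : Sym2 V) (p : G.Walk x y) (hp : e ∉ p.edges) :
    (G.deleteEdges {e}).edist x y ≤ (p.length : ℕ∞) := by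
  have : ∀ f ∈ p.edges, f ∉ ({e} : Set (Sym2 V)) := by
    intro f hf hfe
    exact hp (by simpa using hfe ▸ hf)
  calc (G.deleteEdges {e}).edist x y ≤ ((p.toDeleteEdges {e} this).length : ℕ∞) :=
        SimpleGraph.edist_le _
    _ = (p.length : ℕ∞) := by
        norm_cast
        exact SimpleGraph.Walk.length_transfer _ _

/-- key lemma: if deleting `e` changes `edist x y`, then `e` lies on every shortest path -/
lemma mem_edges_of_changed {x y : V} (e : Sym2 V) (p : G.Walk x y)
    (hlen : p.length = G.dist x y)
    (hch : G.edist x y ≠ (G.deleteEdges {e}).edist x y) : e ∈ p.edges := by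
  by_contra hnot
  apply hch
  apply le_antisymm
  · exact SimpleGraph.edist_anti (G.deleteEdges_le {e})
  · calc (G.deleteEdges {e}).edist x y ≤ (p.length : ℕ∞) := edist_delete_le e p hnot
      _ = (G.dist x y : ℕ∞) := by exact_mod_cast hlen
      _ = G.edist x y := (edist_eq_coe_dist ⟨p⟩).symm

/-- core lemma (lemma E): prefix-endpoint pair detects `e` but not `e' = s(u',v')`. -/
lemma core {x y u' v' : V} (hG : G.Connected) (e : Sym2 V)
    (hadj : G.Adj u' v') (q : G.Walk x u') (r : G.Walk v' y)
    (hpath : (q.append (SimpleGraph.Walk.cons hadj r)).IsPath)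
    (hlen : (q.append (SimpleGraph.Walk.cons hadj r)).length = G.dist x y)
    (heq : e ∈ q.edges)
    (hch : G.edist x y ≠ (G.deleteEdges {e}).edist x y) :
    G.edist x u' ≠ (G.deleteEdges {e}).edist x u' ∧
      G.edist x u' = (G.deleteEdges {s(u', v')}).edist x u' := by
  have hnodup : (q.edges ++ s(u', v') :: r.edges).Nodup := by
    have := hpath.edges_nodup
    rwa [SimpleGraph.Walk.edges_append, SimpleGraph.Walk.edges_cons] at this
  have he'q : s(u', v') ∉ q.edges := by
    intro h
    exact (List.disjoint_of_nodup_append hnodup) h (List.mem_cons_self)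
  have her : e ∉ r.edges := fun h =>
    (List.disjoint_of_nodup_append hnodup) heq (List.mem_cons_of_mem _ h)
  have hee' : e ≠ s(u', v') := fun h =>
    (List.disjoint_of_nodup_append hnodup) heq (h ▸ List.mem_cons_self)
  -- lengths
  have hlen' : q.length + (1 + r.length) = G.dist x y := by
    rw [← hlen, SimpleGraph.Walk.length_append, SimpleGraph.Walk.length_cons]; omega
  have hqd : G.dist x u' ≤ q.length := SimpleGraph.dist_le q
  have hq_eq : q.length = G.dist x u' := by
    have h1 : G.dist x y ≤ G.dist x u' + G.dist u' y := hG.dist_triangle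
    have h2 : G.dist u' y ≤ 1 + r.length := by
      have := SimpleGraph.dist_le (SimpleGraph.Walk.cons hadj r)
      simpa [SimpleGraph.Walk.length_cons, Nat.add_comm] using this
    omega
  have hreach : G.Reachable x u' := ⟨q⟩
  constructor
  · -- deleting e changes edist x u'
    intro hsame
    have hfin : (G.deleteEdges {e}).edist x u' ≠ ⊤ := by
      rw [← hsame, edist_eq_coe_dist hreach]; exact ENat.coe_ne_top _
    obtain ⟨Q, hQ⟩ := SimpleGraph.exists_walk_of_edist_ne_top hfin
    -- Q has length = dist x u'
    have hQlen : Q.length = G.dist x u' := by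
      have : (Q.length : ℕ∞) = (G.dist x u' : ℕ∞) := by
        rw [hQ, ← hsame, edist_eq_coe_dist hreach]
      exact_mod_cast this
    -- transfer Q to G
    have hQsub : ∀ f ∈ Q.edges, f ∈ G.edgeSet := fun f hf =>
      ((SimpleGraph.edgeSet_deleteEdges {e}) ▸ Q.edges_subset_edgeSet hf).1
    have hQe : e ∉ Q.edges := by
      intro hf
      have := (SimpleGraph.edgeSet_deleteEdges {e}) ▸ Q.edges_subset_edgeSet hf
      exact this.2 rfl
    let QG : G.Walk x u' := Q.transfer G hQsub
    have hQGedges : QG.edges = Q.edges := Q.edges_transfer hQsub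
    have hQGlen : QG.length = Q.length := Q.length_transfer hQsub
    -- big walk avoiding e of length dist x y
    let W : G.Walk x y := QG.append (SimpleGraph.Walk.cons hadj r)
    have hWe : e ∉ W.edges := by
      intro hf
      rw [SimpleGraph.Walk.edges_append, SimpleGraph.Walk.edges_cons] at hf
      rcases List.mem_append.mp hf with h | h
      · exact hQe (hQGedges ▸ h)
      · rcases List.mem_cons.mp h with h | h
        · exact hee' h
        · exact her h
    have hWlen : W.length = G.dist x y := by
      simp only [W, SimpleGraph.Walk.length_append, SimpleGraph.Walk.length_cons, hQGlen, hQlen]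
      omega
    apply hch
    apply le_antisymm (SimpleGraph.edist_anti (G.deleteEdges_le {e}))
    calc (G.deleteEdges {e}).edist x y ≤ (W.length : ℕ∞) := edist_delete_le e W hWe
      _ = (G.dist x y : ℕ∞) := by exact_mod_cast hWlen
      _ = G.edist x y := (edist_eq_coe_dist (hG x y)).symm
  · -- deleting e' = s(u',v') does not change edist x u'
    apply le_antisymm (SimpleGraph.edist_anti (G.deleteEdges_le {s(u', v')}))
    calc (G.deleteEdges {s(u', v')}).edist x u' ≤ (q.length : ℕ∞) :=
          edist_delete_le _ q he'q
      _ = (G.dist x u' : ℕ∞) := by exact_mod_cast hq_eq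
      _ = G.edist x u' := (edist_eq_coe_dist hreach).symm

/-- main symmetric step: contradiction from equal pairs sets -/
lemma main_step {x y : V} (hG : G.Connected) (e e' : Sym2 V) (hne : e ≠ e')
    (hche : G.edist x y ≠ (G.deleteEdges {e}).edist x y)
    (hche' : G.edist x y ≠ (G.deleteEdges {e'}).edist x y)
    (hpairs : ∀ w, G.edist x w ≠ (G.deleteEdges {e}).edist x w ↔
        G.edist x w ≠ (G.deleteEdges {e'}).edist x w) : False := by
  obtain ⟨p, hp, hlen⟩ := hG.exists_path_of_dist x y
  have hep : e ∈ p.edges := mem_edges_of_changed e p hlen hche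
  have he'p : e' ∈ p.edges := mem_edges_of_changed e' p hlen hche'
  obtain ⟨u', v', hadj, q, r, heq', hpeq⟩ := exists_decomp p e' he'p
  subst hpeq
  rw [SimpleGraph.Walk.edges_append, SimpleGraph.Walk.edges_cons] at hep
  rcases List.mem_append.mp hep with hcase | hcase
  · -- e before e'
    obtain ⟨h1, h2⟩ := core hG e hadj q r hp hlen hcase hche
    subst heq'
    exact ((hpairs u').mp h1) h2
  · rcases List.mem_cons.mp hcase with hcase | hcase
    · exact hne (hcase.trans heq'.symm)
    · -- e after e': decompose r at e
      obtain ⟨a, b, hab, q2, r2, heab, hreq⟩ := exists_decomp r e hcase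
      subst hreq
      have hassoc : q.append (SimpleGraph.Walk.cons hadj (q2.append (SimpleGraph.Walk.cons hab r2)))
          = (q.append (SimpleGraph.Walk.cons hadj q2)).append (SimpleGraph.Walk.cons hab r2) := by
        rw [← SimpleGraph.Walk.cons_append, SimpleGraph.Walk.append_assoc]
      rw [hassoc] at hp hlen
      have he'mem : e' ∈ (q.append (SimpleGraph.Walk.cons hadj q2)).edges := by
        rw [SimpleGraph.Walk.edges_append, SimpleGraph.Walk.edges_cons, heq']
        exact List.mem_append.mpr (Or.inr (List.mem_cons_self))
      obtain ⟨h1, h2⟩ := core hG e' hab (q.append (SimpleGraph.Walk.cons hadj q2)) r2 hp hlen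
        he'mem hche'
      subst heab
      exact ((hpairs a).mpr h1) h2

end DEMAux

theorem stmt0 {V : Type*} [Fintype V] (G : SimpleGraph V) (hG : G.Connected)
    (M : Set V) (hM : IsDEMSet G M) (e e' : Sym2 V)
    (he : e ∈ G.edgeSet) (he' : e' ∈ G.edgeSet) (hne : e ≠ e') :
    pairs G M e ≠ pairs G M e' := by
  intro hEq
  obtain ⟨x, hxM, y, hΔe'⟩ := hM e' he'
  have hxy' : (x, y) ∈ pairs G M e' := ⟨hxM, hΔe'⟩
  have hxy : (x, y) ∈ pairs G M e := hEq ▸ hxy'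
  have hΔe : G.edist x y ≠ (G.deleteEdges {e}).edist x y := hxy.2
  refine DEMAux.main_step hG e e' hne hΔe hΔe' (fun w => ?_)
  constructor
  · intro h
    have : (x, w) ∈ pairs G M e' := hEq ▸ (⟨hxM, h⟩ : (x, w) ∈ pairs G M e)
    exact this.2
  · intro h
    have : (x, w) ∈ pairs G M e := hEq ▸ (⟨hxM, h⟩ : (x, w) ∈ pairs G M e')
    exact this.2
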